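/- Let g be a monic complex polynomial of degree k, let d ≥ 1, set q = g^d and n = dk, and let C_q be the companion matrix of q. Let λ_0 ∈ ℂ be a root of g. Then C_q v_n(λ_0) = λ_0 v_n(λ_0), and for every j = 1, …, d−1 one has C_q S_j v_n(λ_0) = λ_0 S_j v_n(λ_0) + S_{j−1} v_n(λ_0) (with S_0 = I_n). In other words, v_n(λ_0), S_1 v_n(λ_0), …, S_{d−1} v_n(λ_0) is a Jordan chain of length d of C_q at the eigenvalue λ_0. -/
import Mathlib


open Polynomial Matrix Kronecker

noncomputable section

/-- Companion matrix of a monic polynomial of degree `k`: ones on the superdiagonal,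
last row the negatives of the coefficients. -/
def companion (k : ℕ) (g : Polynomial ℂ) : Matrix (Fin k) (Fin k) ℂ :=
  fun i j => if (i : ℕ) + 1 = (j : ℕ) then 1
    else if (i : ℕ) = k - 1 then -g.coeff (j : ℕ) else 0

/-- The `d × d` nilpotent matrix with ones on the superdiagonal. -/
def superdiag (d : ℕ) : Matrix (Fin d) (Fin d) ℂ :=
  fun i j => if (i : ℕ) + 1 = (j : ℕ) then 1 else 0

/-- The companion-Jordan block `C(g,d) = I_d ⊗ C_g + N_d ⊗ I_k`. -/
def CJ (k : ℕ) (g : Polynomial ℂ) (d : ℕ) : Matrix (Fin d × Fin k) (Fin d × Fin k) ℂ :=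
  (1 : Matrix (Fin d) (Fin d) ℂ) ⊗ₖ companion k g
    + superdiag d ⊗ₖ (1 : Matrix (Fin k) (Fin k) ℂ)

/-- The column vector `(1, λ, λ², …, λ^{n−1})ᵀ`. -/
def vvec (n : ℕ) (lam : ℂ) : Fin n → ℂ := fun i => lam ^ (i : ℕ)

/-- The matrix `S_j` whose `(r, r−j)` entry is the binomial coefficient `C(r, j)`
(0-indexed), all other entries zero; `S_0 = I`. -/
def Smat (n j : ℕ) : Matrix (Fin n) (Fin n) ℂ :=
  fun r c => if (r : ℕ) = (c : ℕ) + j then ((r : ℕ).choose j : ℂ) else 0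

/-- Jordan chains of companion matrices.
Let `g` be monic of degree `k` over `ℂ`, `d ≥ 1`, `q = g^d`, `n = d·k`. If `λ₀` is a root
of `g`, then `C_q v_n(λ₀) = λ₀ v_n(λ₀)` and `C_q S_j v_n(λ₀) = λ₀ S_j v_n(λ₀) + S_{j-1} v_n(λ₀)`
for `j = 1, …, d−1`; i.e. `v_n(λ₀), S_1 v_n(λ₀), …, S_{d−1} v_n(λ₀)` is a Jordan chain of
length `d` of `C_q` at `λ₀`. -/
lemma hasse_eval (q : Polynomial ℂ) (j : ℕ) (lam : ℂ) :
    Polynomial.eval lam (Polynomial.hasseDeriv j q)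
      = ∑ c ∈ Finset.range (q.natDegree + 1), ((c.choose j : ℂ) * q.coeff c) * lam ^ (c - j) := by
  rw [Polynomial.hasseDeriv_apply, Polynomial.sum_def, Polynomial.eval_finset_sum]
  simp only [Polynomial.eval_monomial]
  refine Finset.sum_subset q.supp_subset_range_natDegree_succ ?_
  intro x _ hx
  simp [Polynomial.notMem_support_iff.1 hx]

lemma hasse_root (g : Polynomial ℂ) (hg : g ≠ 0) (lam : ℂ) (hroot : g.IsRoot lam)
    (d j : ℕ) (hj : j < d) : Polynomial.eval lam (Polynomial.hasseDeriv j (g ^ d)) = 0 := by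
  have hq : (g ^ d : Polynomial ℂ) ≠ 0 := pow_ne_zero _ hg
  have hdvd : (X - C lam) ^ d ∣ g ^ d :=
    pow_dvd_pow_of_dvd (Polynomial.dvd_iff_isRoot.2 hroot) d
  have hmult : d ≤ Polynomial.rootMultiplicity lam (g ^ d) :=
    (Polynomial.le_rootMultiplicity_iff hq).2 hdvd
  have h1 : (Polynomial.derivative^[j] (g ^ d)).IsRoot lam :=
    Polynomial.isRoot_iterate_derivative_of_lt_rootMultiplicity (lt_of_lt_of_le hj hmult)
  have h2 := congrFun (Polynomial.factorial_smul_hasseDeriv (R := ℂ) j) (g ^ d)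
  simp only [LinearMap.smul_apply] at h2
  have h3 : Polynomial.eval lam ((Nat.factorial j) • Polynomial.hasseDeriv j (g ^ d)) = 0 := by
    rw [h2]; exact h1
  rw [nsmul_eq_mul, Polynomial.eval_mul, Polynomial.eval_natCast] at h3
  have hfac : ((Nat.factorial j : ℕ) : ℂ) ≠ 0 := Nat.cast_ne_zero.2 (Nat.factorial_ne_zero j)
  exact (mul_eq_zero.1 h3).resolve_left hfac

lemma Smat_mulVec (n j : ℕ) (lam : ℂ) (r : Fin n) :
    (Smat n j).mulVec (vvec n lam) r = ((r : ℕ).choose j : ℂ) * lam ^ ((r : ℕ) - j) := by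
  unfold Smat vvec Matrix.mulVec dotProduct
  by_cases h : j ≤ (r : ℕ)
  · have hlt : (r : ℕ) - j < n := lt_of_le_of_lt (Nat.sub_le _ _) r.isLt
    rw [Finset.sum_eq_single (⟨(r : ℕ) - j, hlt⟩ : Fin n)]
    · simp [Nat.sub_add_cancel h]
    · intro b _ hb
      have hne : (r : ℕ) ≠ (b : ℕ) + j := by
        intro hc; exact hb (Fin.ext (show (b : ℕ) = (r : ℕ) - j by omega))
      simp [hne]
    · simp
  · rw [Finset.sum_eq_zero, Nat.choose_eq_zero_of_lt (lt_of_not_ge h)]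
    · simp
    · intro b _
      have hne : (r : ℕ) ≠ (b : ℕ) + j := by omega
      simp [hne]

lemma companion_mulVec_ne_last (n : ℕ) (q : Polynomial ℂ) (w : Fin n → ℂ)
    (i : Fin n) (h : (i : ℕ) + 1 < n) :
    (companion n q).mulVec w i = w ⟨(i : ℕ) + 1, h⟩ := by
  unfold companion Matrix.mulVec dotProduct
  rw [Finset.sum_eq_single (⟨(i : ℕ) + 1, h⟩ : Fin n)]
  · simp
  · intro b _ hb
    have h1 : (i : ℕ) + 1 ≠ (b : ℕ) := fun hc => hb (Fin.ext hc.symm)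
    have h2 : (i : ℕ) ≠ n - 1 := by omega
    simp [h1, h2]
  · simp

lemma companion_mulVec_last (n : ℕ) (q : Polynomial ℂ) (w : Fin n → ℂ)
    (i : Fin n) (h : (i : ℕ) = n - 1) :
    (companion n q).mulVec w i = -∑ c : Fin n, q.coeff (c : ℕ) * w c := by
  unfold companion Matrix.mulVec dotProduct
  rw [← Finset.sum_neg_distrib]
  refine Finset.sum_congr rfl fun b _ => ?_
  have hb := b.isLt
  have hi := i.isLt
  have h1 : ¬(n - 1 + 1 = (b : ℕ)) := by omega
  simp [h, h1]

lemma sum_last (q : Polynomial ℂ) (n : ℕ) (hn : 0 < n) (hq : q.natDegree = n)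
    (hlc : q.coeff n = 1) (j : ℕ) (lam : ℂ)
    (hzero : Polynomial.eval lam (Polynomial.hasseDeriv j q) = 0) :
    -∑ c : Fin n, q.coeff (c : ℕ) * (((c : ℕ).choose j : ℂ) * lam ^ ((c : ℕ) - j))
      = (n.choose j : ℂ) * lam ^ (n - j) := by
  have h1 := hasse_eval q j lam
  rw [hq, Finset.sum_range_succ, hlc, hzero] at h1
  have h2 : ∑ c : Fin n, q.coeff (c : ℕ) * (((c : ℕ).choose j : ℂ) * lam ^ ((c : ℕ) - j))
      = ∑ c ∈ Finset.range n, ((c.choose j : ℂ) * q.coeff c) * lam ^ (c - j) := by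
    rw [← Fin.sum_univ_eq_sum_range (fun c => ((c.choose j : ℂ) * q.coeff c) * lam ^ (c - j)) n]
    exact Finset.sum_congr rfl fun c _ => by ring
  rw [h2]
  linear_combination h1

lemma rowid (i j : ℕ) (hj : 1 ≤ j) (lam : ℂ) :
    (((i + 1).choose j : ℕ) : ℂ) * lam ^ (i + 1 - j)
      = lam * ((i.choose j : ℂ) * lam ^ (i - j))
        + ((i.choose (j - 1) : ℕ) : ℂ) * lam ^ (i - (j - 1)) := by
  obtain ⟨j, rfl⟩ : ∃ j', j = j' + 1 := ⟨j - 1, by omega⟩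
  simp only [Nat.add_sub_cancel]
  rcases lt_trichotomy i j with h | rfl | h
  · rw [Nat.choose_eq_zero_of_lt (by omega), Nat.choose_eq_zero_of_lt (by omega),
      Nat.choose_eq_zero_of_lt (by omega)]
    simp
  · rw [Nat.choose_self, Nat.choose_eq_zero_of_lt (by omega), Nat.choose_self]
    simp
  · rw [Nat.choose_succ_succ]
    have e1 : i + 1 - (j + 1) = i - j := by omega
    have e2 : i - j = (i - (j + 1)) + 1 := by omega
    rw [e1, e2, Nat.cast_add]
    ring

theorem stmt_3 (k d : ℕ) (hd : 1 ≤ d) (g : Polynomial ℂ)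
    (hmon : g.Monic) (hdeg : g.natDegree = k)
    (lam : ℂ) (hroot : g.IsRoot lam) :
    (companion (d * k) (g ^ d)).mulVec (vvec (d * k) lam) = lam • vvec (d * k) lam ∧
    ∀ j : ℕ, 1 ≤ j → j ≤ d - 1 →
      (companion (d * k) (g ^ d)).mulVec ((Smat (d * k) j).mulVec (vvec (d * k) lam))
        = lam • (Smat (d * k) j).mulVec (vvec (d * k) lam)
          + (Smat (d * k) (j - 1)).mulVec (vvec (d * k) lam) := by
  set n := d * k with hn_def
  have hg0 : g ≠ 0 := hmon.ne_zero
  have hk : 0 < k := by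
    rcases Nat.eq_zero_or_pos k with h0 | h
    · exfalso
      have hg1 : g = 1 := hmon.natDegree_eq_zero.1 (hdeg.trans h0)
      rw [hg1] at hroot
      simp [Polynomial.IsRoot] at hroot
    · exact h
  have hn : 0 < n := Nat.mul_pos (by omega) hk
  have hqdeg : (g ^ d).natDegree = n := by rw [hmon.natDegree_pow, hdeg]
  have hqlc : (g ^ d).coeff n = 1 := by
    have := (hmon.pow d).coeff_natDegree
    rwa [hqdeg] at this
  have hzero : ∀ j, j < d → Polynomial.eval lam (Polynomial.hasseDeriv j (g ^ d)) = 0 :=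
    fun j hj => hasse_root g hg0 lam hroot d j hj
  have hw : ∀ m, (Smat n m).mulVec (vvec n lam)
      = fun r : Fin n => ((r : ℕ).choose m : ℂ) * lam ^ ((r : ℕ) - m) :=
    fun m => funext (Smat_mulVec n m lam)
  constructor
  · funext i
    by_cases hi : (i : ℕ) + 1 < n
    · rw [companion_mulVec_ne_last n (g ^ d) _ i hi]
      show lam ^ ((i : ℕ) + 1) = lam • vvec n lam i
      simp only [Pi.smul_apply, smul_eq_mul, vvec, pow_succ]
      ring
    · have hieq : (i : ℕ) = n - 1 := by have := i.isLt; omega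
      rw [companion_mulVec_last n (g ^ d) _ i hieq]
      have hs := sum_last (g ^ d) n hn hqdeg hqlc 0 lam (hzero 0 (by omega))
      simp only [Nat.choose_zero_right, Nat.cast_one, one_mul, Nat.sub_zero] at hs
      show -∑ c : Fin n, (g ^ d).coeff (c : ℕ) * vvec n lam c = lam * vvec n lam i
      simp only [vvec]
      rw [hs, hieq, ← pow_succ']
      congr 1
      omega
  · intro j hj1 hj2
    rw [hw j, hw (j - 1)]
    funext i
    by_cases hi : (i : ℕ) + 1 < n
    · rw [companion_mulVec_ne_last n (g ^ d) _ i hi]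
      simp only [Pi.add_apply, Pi.smul_apply, smul_eq_mul]
      exact rowid (i : ℕ) j hj1 lam
    · have hieq : (i : ℕ) = n - 1 := by have := i.isLt; omega
      rw [companion_mulVec_last n (g ^ d) _ i hieq]
      simp only [Pi.add_apply, Pi.smul_apply, smul_eq_mul]
      rw [hieq]
      have hs := sum_last (g ^ d) n hn hqdeg hqlc j lam (hzero j (by omega))
      have hr := rowid (n - 1) j hj1 lam
      rw [show n - 1 + 1 = n by omega] at hr
      exact hs.trans hr
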